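/- arXiv:1501.04080 — 4 statements merged into one kernel-verified Lean document; each statement's English description precedes it below -/
import Mathlib

section
/- Let Λ be a finite set and q, q' : Λ → ℝ with sup_{λ}|q(λ) - q'(λ)| ≤ Δ. Let P (resp. P') be the distribution on Λ with P(λ) ∝ exp(ε·q(λ)/(2Δ)) (resp. with q'). Then for all λ ∈ Λ, P(λ) ≤ e^ε · P'(λ). -/
open Finset

/-- The exponential mechanism is `ε`-differentially private: if the score functions
`q, q'` (from neighboring datasets) differ pointwise by at most `Δ`, then for every
output `l`, the probability of outputting `l` under `q` is at most `e^ε` times the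
probability under `q'`. -/
theorem exponential_mechanism_dp {Λ : Type*} [Fintype Λ] [Nonempty Λ]
    (q q' : Λ → ℝ) (ε Δ : ℝ) (hε : 0 < ε) (hΔ : 0 < Δ)
    (hsens : ∀ l : Λ, |q l - q' l| ≤ Δ) (l : Λ) :
    Real.exp (ε * q l / (2 * Δ)) / (∑ m : Λ, Real.exp (ε * q m / (2 * Δ)))
      ≤ Real.exp ε *
        (Real.exp (ε * q' l / (2 * Δ)) / (∑ m : Λ, Real.exp (ε * q' m / (2 * Δ)))) := by
  have h2Δ : (0:ℝ) < 2 * Δ := by linarith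
  have hS : (0:ℝ) < ∑ m : Λ, Real.exp (ε * q m / (2 * Δ)) :=
    Finset.sum_pos (fun m _ => Real.exp_pos _) Finset.univ_nonempty
  have hS' : (0:ℝ) < ∑ m : Λ, Real.exp (ε * q' m / (2 * Δ)) :=
    Finset.sum_pos (fun m _ => Real.exp_pos _) Finset.univ_nonempty
  -- numerator bound
  have hnum : Real.exp (ε * q l / (2 * Δ)) ≤
      Real.exp (ε / 2) * Real.exp (ε * q' l / (2 * Δ)) := by
    rw [← Real.exp_add]
    apply Real.exp_le_exp.mpr
    have h1 : q l - q' l ≤ Δ := (abs_le.mp (hsens l)).2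
    have key : ε * q l ≤ ε * Δ + ε * q' l := by nlinarith
    calc ε * q l / (2 * Δ) ≤ (ε * Δ + ε * q' l) / (2 * Δ) := by gcongr
      _ = ε / 2 + ε * q' l / (2 * Δ) := by field_simp
  -- denominator bound
  have hden : ∑ m : Λ, Real.exp (ε * q' m / (2 * Δ)) ≤
      Real.exp (ε / 2) * ∑ m : Λ, Real.exp (ε * q m / (2 * Δ)) := by
    rw [Finset.mul_sum]
    apply Finset.sum_le_sum
    intro m _
    rw [← Real.exp_add]
    apply Real.exp_le_exp.mpr
    have h1 : q' m - q m ≤ Δ := by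
      have := (abs_le.mp (hsens m)).1; linarith
    have key : ε * q' m ≤ ε * Δ + ε * q m := by nlinarith
    calc ε * q' m / (2 * Δ) ≤ (ε * Δ + ε * q m) / (2 * Δ) := by gcongr
      _ = ε / 2 + ε * q m / (2 * Δ) := by field_simp
  calc Real.exp (ε * q l / (2 * Δ)) / (∑ m : Λ, Real.exp (ε * q m / (2 * Δ)))
      ≤ (Real.exp (ε / 2) * Real.exp (ε * q' l / (2 * Δ))) /
        ((∑ m : Λ, Real.exp (ε * q' m / (2 * Δ))) / Real.exp (ε / 2)) := by
        apply div_le_div₀ (by positivity) hnum (by positivity)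
        rw [div_le_iff₀ (Real.exp_pos _)]
        linarith [hden]
    _ = Real.exp ε *
        (Real.exp (ε * q' l / (2 * Δ)) / (∑ m : Λ, Real.exp (ε * q' m / (2 * Δ)))) := by
        have h : Real.exp (ε / 2) * Real.exp (ε * q' l / (2 * Δ)) * Real.exp (ε / 2)
            = Real.exp ε * Real.exp (ε * q' l / (2 * Δ)) := by
          rw [mul_comm, ← mul_assoc, ← Real.exp_add, add_halves]
        rw [div_div_eq_mul_div, h, mul_div_assoc]
end

section
/- Let Λ be a finite set, q : Λ → ℝ, Δ > 0, ε > 0, and let λ̃ be drawn from the distribution P(λ) ∝ exp(ε·q(λ)/(2Δ)). Then for any a > 0, with probability at least 1 - e^{-a}, q(λ̃) ≥ max_{λ ∈ Λ} q(λ) - (2Δ/ε)·(log|Λ| + a). -/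
open Finset

/-- Exponential mechanism utility: if `λ̃` is drawn with probability proportional to
`exp (ε q(λ)/(2Δ))`, then with probability at least `1 - e^{-a}`,
`q(λ̃) ≥ max_λ q(λ) - (2Δ/ε)(log |Λ| + a)`. -/
theorem exponential_mechanism_utility {Λ : Type*} [Fintype Λ] [Nonempty Λ]
    (q : Λ → ℝ) (ε Δ a : ℝ) (hε : 0 < ε) (hΔ : 0 < Δ) (ha : 0 < a) :
    1 - Real.exp (-a) ≤
      ∑ l ∈ Finset.univ.filter (fun l : Λ =>
          Finset.univ.sup' Finset.univ_nonempty q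
            - 2 * Δ / ε * (Real.log (Fintype.card Λ) + a) ≤ q l),
        Real.exp (ε * q l / (2 * Δ)) / (∑ m : Λ, Real.exp (ε * q m / (2 * Δ))) := by
  set M := Finset.univ.sup' Finset.univ_nonempty q with hM
  set N : ℝ := (Fintype.card Λ : ℝ) with hN
  have hN1 : (1 : ℝ) ≤ N := by
    have : 1 ≤ Fintype.card Λ := Fintype.card_pos
    rw [hN]; exact_mod_cast this
  have hN0 : 0 < N := lt_of_lt_of_le one_pos hN1
  set t := 2 * Δ / ε * (Real.log N + a) with ht
  set S := ∑ m : Λ, Real.exp (ε * q m / (2 * Δ)) with hS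
  have hS0 : 0 < S := Finset.sum_pos (fun m _ => Real.exp_pos _) univ_nonempty
  -- exp(εM/(2Δ)) ≤ S
  have hMmem : ∃ l0 : Λ, q l0 = M := by
    obtain ⟨l0, _, hl0⟩ := Finset.exists_mem_eq_sup' (univ_nonempty) q
    exact ⟨l0, hl0.symm⟩
  obtain ⟨l0, hl0⟩ := hMmem
  have hexpM : Real.exp (ε * M / (2 * Δ)) ≤ S := by
    rw [← hl0, hS]
    exact Finset.single_le_sum (f := fun m => Real.exp (ε * q m / (2 * Δ)))
      (fun m _ => (Real.exp_pos _).le) (Finset.mem_univ l0)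
  -- bad sum bound
  have hbad : ∑ l ∈ Finset.univ.filter (fun l : Λ => ¬ (M - t ≤ q l)),
      Real.exp (ε * q l / (2 * Δ)) ≤ Real.exp (-a) * S := by
    have hbound : ∀ l ∈ Finset.univ.filter (fun l : Λ => ¬ (M - t ≤ q l)),
        Real.exp (ε * q l / (2 * Δ)) ≤ Real.exp (ε * (M - t) / (2 * Δ)) := by
      intro l hl
      rw [Finset.mem_filter] at hl
      have : q l ≤ M - t := (not_le.mp hl.2).le
      apply Real.exp_le_exp.mpr
      apply div_le_div_of_nonneg_right _ (by linarith)
      exact mul_le_mul_of_nonneg_left this hε.le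
    calc ∑ l ∈ Finset.univ.filter (fun l : Λ => ¬ (M - t ≤ q l)),
          Real.exp (ε * q l / (2 * Δ))
        ≤ ∑ _l ∈ Finset.univ.filter (fun l : Λ => ¬ (M - t ≤ q l)),
          Real.exp (ε * (M - t) / (2 * Δ)) := Finset.sum_le_sum hbound
      _ = (Finset.univ.filter (fun l : Λ => ¬ (M - t ≤ q l))).card *
          Real.exp (ε * (M - t) / (2 * Δ)) := by rw [Finset.sum_const, nsmul_eq_mul]
      _ ≤ N * Real.exp (ε * (M - t) / (2 * Δ)) := by
          apply mul_le_mul_of_nonneg_right _ (Real.exp_pos _).le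
          rw [hN]
          exact_mod_cast Finset.card_filter_le _ _
      _ ≤ Real.exp (-a) * S := by
          have hεt : ε * (M - t) / (2 * Δ) = ε * M / (2 * Δ) - (Real.log N + a) := by
            rw [ht]
            field_simp
          have he : Real.exp (ε * (M - t) / (2 * Δ))
              = Real.exp (ε * M / (2 * Δ)) * Real.exp (-a) / N := by
            rw [hεt, Real.exp_sub, Real.exp_add, Real.exp_log hN0, Real.exp_neg]
            field_simp
          rw [he, mul_comm, div_mul_cancel₀ _ (ne_of_gt hN0), mul_comm]
          exact mul_le_mul_of_nonneg_left hexpM (Real.exp_pos _).le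
    -- done
  -- main
  rw [← Finset.sum_div, le_div_iff₀ hS0]
  have hsplit : ∑ l ∈ Finset.univ.filter (fun l : Λ => M - t ≤ q l),
      Real.exp (ε * q l / (2 * Δ))
      = S - ∑ l ∈ Finset.univ.filter (fun l : Λ => ¬ (M - t ≤ q l)),
      Real.exp (ε * q l / (2 * Δ)) := by
    rw [hS, ← Finset.sum_filter_add_sum_filter_not Finset.univ (fun l : Λ => M - t ≤ q l)]
    ring
  rw [hsplit]
  nlinarith [Real.exp_pos (-a)]
end

section
/- Let ℓᵢ : ℝᵈ → ℝ, i = 1,...,n, be convex differentiable 1-Lipschitz functions and for λ > 0 define O_λ(w) = (λ/2)‖w‖² + (1/n)Σᵢ ℓᵢ(w) with minimizer w_λ. Then for 0 < λ < λ', ‖w_λ - w_{λ'}‖ ≤ (λ' - λ)/(λ·λ'). -/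
open Filter Topology Set

/-- Strong-convexity inequality for a minimizer of `c/2‖·‖² + f` with `f` convex. -/
lemma strong_min {E : Type*} [NormedAddCommGroup E] [InnerProductSpace ℝ E]
    (f : E → ℝ) (hf : ConvexOn ℝ Set.univ f) (c : ℝ) (hc : 0 < c)
    (u : E) (hu : IsMinOn (fun v => c / 2 * ‖v‖ ^ 2 + f v) Set.univ u) (v : E) :
    c / 2 * ‖u‖ ^ 2 + f u + c / 2 * ‖v - u‖ ^ 2 ≤ c / 2 * ‖v‖ ^ 2 + f v := by
  have hid : ∀ t : ℝ, ‖(1 - t) • u + t • v‖ ^ 2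
      = (1 - t) * ‖u‖ ^ 2 + t * ‖v‖ ^ 2 - (1 - t) * t * ‖v - u‖ ^ 2 := by
    intro t
    simp only [← real_inner_self_eq_norm_sq, real_inner_add_add_self, real_inner_sub_sub_self,
      real_inner_smul_left, real_inner_smul_right]
    rw [real_inner_comm v u]
    ring
  have key : ∀ t ∈ Set.Ioo (0 : ℝ) 1,
      c / 2 * (1 - t) * ‖v - u‖ ^ 2 ≤ (c / 2 * ‖v‖ ^ 2 + f v) - (c / 2 * ‖u‖ ^ 2 + f u) := by
    intro t ht
    have hmin := hu (Set.mem_univ ((1 - t) • u + t • v))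
    simp only [Set.mem_setOf_eq] at hmin
    have hcvx := hf.2 (Set.mem_univ u) (Set.mem_univ v)
      (by linarith [ht.2] : (0:ℝ) ≤ 1 - t) (le_of_lt ht.1) (by ring)
    simp only [smul_eq_mul] at hcvx
    rw [hid t] at hmin
    have ht0 : 0 < t := ht.1
    nlinarith [hmin, hcvx, ht0]
  have hlim : Tendsto (fun t : ℝ => c / 2 * (1 - t) * ‖v - u‖ ^ 2) (𝓝[>] (0:ℝ))
      (𝓝 (c / 2 * ‖v - u‖ ^ 2)) := by
    have hcont : Continuous (fun t : ℝ => c / 2 * (1 - t) * ‖v - u‖ ^ 2) := by continuity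
    have := hcont.tendsto 0
    simp only [sub_zero, mul_one] at this
    exact this.mono_left nhdsWithin_le_nhds
  have := le_of_tendsto hlim (Filter.eventually_iff_exists_mem.mpr
    ⟨Set.Ioo 0 1, Ioo_mem_nhdsGT_of_mem ⟨le_refl 0, one_pos⟩, key⟩)
  linarith

/-- Stability of regularized ERM: if each loss `ℓᵢ` is convex, differentiable and
`1`-Lipschitz, and `w_λ, w_{λ'}` minimize `O_λ(w) = (λ/2)‖w‖² + (1/n) Σᵢ ℓᵢ(w)` and
`O_{λ'}` respectively, then for `0 < λ < λ'`, `‖w_λ - w_{λ'}‖ ≤ (λ' - λ)/(λ λ')`. -/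
theorem erm_minimizer_stability {d n : ℕ} (hn : 0 < n)
    (ℓ : Fin n → EuclideanSpace ℝ (Fin d) → ℝ)
    (hconv : ∀ i, ConvexOn ℝ Set.univ (ℓ i))
    (hdiff : ∀ i, Differentiable ℝ (ℓ i))
    (hlip : ∀ i, LipschitzWith 1 (ℓ i))
    (lam lam' : ℝ) (hlam : 0 < lam) (hlt : lam < lam')
    (w w' : EuclideanSpace ℝ (Fin d))
    (hw : IsMinOn (fun v => lam / 2 * ‖v‖ ^ 2 + (1 / (n : ℝ)) * ∑ i, ℓ i v) Set.univ w)
    (hw' : IsMinOn (fun v => lam' / 2 * ‖v‖ ^ 2 + (1 / (n : ℝ)) * ∑ i, ℓ i v) Set.univ w') :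
    ‖w - w'‖ ≤ (lam' - lam) / (lam * lam') := by
  have hlam' : 0 < lam' := hlam.trans hlt
  set f : EuclideanSpace ℝ (Fin d) → ℝ := fun v => (1 / (n : ℝ)) * ∑ i, ℓ i v with hfdef
  have hnpos : (0:ℝ) < n := Nat.cast_pos.mpr hn
  have hfconv : ConvexOn ℝ Set.univ f := by
    have hsum : ConvexOn ℝ Set.univ (fun v => ∑ i, ℓ i v) := by
      classical
      have h0 : ConvexOn ℝ Set.univ (∑ i : Fin n, ℓ i) :=
        Finset.sum_induction ℓ _ (fun a b ha hb => ha.add hb)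
          (convexOn_const (0:ℝ) convex_univ) (fun i _ => hconv i)
      have he : (fun v => ∑ i, ℓ i v) = ∑ i : Fin n, ℓ i := by
        funext v; simp [Finset.sum_apply]
      rwa [he]
    simpa [hfdef] using hsum.smul (le_of_lt (by positivity : (0:ℝ) < 1 / (n:ℝ)))
  have hflip : ∀ a b : EuclideanSpace ℝ (Fin d), f a - f b ≤ ‖a - b‖ := by
    intro a b
    have h1 : ∀ i : Fin n, ℓ i a - ℓ i b ≤ ‖a - b‖ := by
      intro i
      have h := (hlip i).dist_le_mul a b
      rw [NNReal.coe_one, one_mul, dist_eq_norm] at h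
      calc ℓ i a - ℓ i b ≤ |ℓ i a - ℓ i b| := le_abs_self _
        _ = dist (ℓ i a) (ℓ i b) := (Real.dist_eq _ _).symm
        _ ≤ ‖a - b‖ := h
    have h2 : ∑ i, ℓ i a - ∑ i, ℓ i b ≤ n * ‖a - b‖ := by
      rw [← Finset.sum_sub_distrib]
      calc ∑ i, (ℓ i a - ℓ i b) ≤ ∑ _i : Fin n, ‖a - b‖ := Finset.sum_le_sum fun i _ => h1 i
        _ = n * ‖a - b‖ := by simp [Finset.sum_const, mul_comm]
    have heq : f a - f b = (1 / (n:ℝ)) * (∑ i, ℓ i a - ∑ i, ℓ i b) := by rw [hfdef]; ring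
    rw [heq]
    calc (1 / (n:ℝ)) * (∑ i, ℓ i a - ∑ i, ℓ i b) ≤ (1 / (n:ℝ)) * (n * ‖a - b‖) :=
          mul_le_mul_of_nonneg_left h2 (by positivity)
      _ = ‖a - b‖ := by field_simp
  have hnormbd : ∀ (c : ℝ), 0 < c → ∀ u : EuclideanSpace ℝ (Fin d),
      IsMinOn (fun v => c / 2 * ‖v‖ ^ 2 + f v) Set.univ u → ‖u‖ ≤ 1 / c := by
    intro c hc u hu
    have h0 := strong_min f hfconv c hc u hu 0
    simp only [norm_zero, zero_sub, norm_neg] at h0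
    have hL := hflip 0 u
    simp only [zero_sub, norm_neg] at hL
    have hcu : c * ‖u‖ ^ 2 ≤ ‖u‖ := by nlinarith
    rcases eq_or_lt_of_le (norm_nonneg u) with h | h
    · rw [← h]; positivity
    · rw [le_div_iff₀ hc]; nlinarith
  have hA : ‖w‖ ≤ 1 / lam := hnormbd lam hlam w hw
  have hB : ‖w'‖ ≤ 1 / lam' := hnormbd lam' hlam' w' hw'
  have h1 := strong_min f hfconv lam hlam w hw w'
  have h2 := strong_min f hfconv lam' hlam' w' hw' w
  rw [show w' - w = -(w - w') from (neg_sub _ _).symm, norm_neg] at h1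
  set D := ‖w - w'‖ with hD
  have hDnn : 0 ≤ D := norm_nonneg _
  have hsum : (lam + lam') * D ^ 2 ≤ (lam' - lam) * (‖w‖ ^ 2 - ‖w'‖ ^ 2) := by linarith
  have hAB : ‖w‖ - ‖w'‖ ≤ D := norm_sub_norm_le w w'
  have hsq : ‖w‖ ^ 2 - ‖w'‖ ^ 2 ≤ (‖w‖ + ‖w'‖) * D := by nlinarith [norm_nonneg w, norm_nonneg w']
  rcases eq_or_lt_of_le hDnn with h | hDpos
  · rw [← h]; exact div_nonneg (by linarith) (by positivity)
  · rw [le_div_iff₀ (by positivity)]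
    have hfin : (lam + lam') * D ≤ (lam' - lam) * (‖w‖ + ‖w'‖) := by
      have hh := hsum.trans (mul_le_mul_of_nonneg_left hsq (by linarith))
      nlinarith [hh, hDpos]
    have hABbd : lam * lam' * (‖w‖ + ‖w'‖) ≤ lam + lam' := by
      have h3 : lam * ‖w‖ ≤ 1 := by rw [le_div_iff₀ hlam] at hA; linarith
      have h4 : lam' * ‖w'‖ ≤ 1 := by rw [le_div_iff₀ hlam'] at hB; linarith
      nlinarith [norm_nonneg w, norm_nonneg w']
    have step1 : lam * lam' * ((lam + lam') * D) ≤ lam * lam' * ((lam' - lam) * (‖w‖ + ‖w'‖)) :=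
      mul_le_mul_of_nonneg_left hfin (by positivity)
    have step2 : (lam' - lam) * (lam * lam' * (‖w‖ + ‖w'‖)) ≤ (lam' - lam) * (lam + lam') :=
      mul_le_mul_of_nonneg_left hABbd (by linarith)
    have hplus : (0:ℝ) < lam + lam' := by linarith
    refine le_of_mul_le_mul_left ?_ hplus
    calc (lam + lam') * (D * (lam * lam')) = lam * lam' * ((lam + lam') * D) := by ring
      _ ≤ lam * lam' * ((lam' - lam) * (‖w‖ + ‖w'‖)) := step1
      _ = (lam' - lam) * (lam * lam' * (‖w‖ + ‖w'‖)) := by ring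
      _ ≤ (lam' - lam) * (lam + lam') := step2
      _ = (lam + lam') * (lam' - lam) := by ring
end

section
/- Under the setting where each regularized ERM objective O_λ(w) = (λ/2)‖w‖² + (1/n)Σᵢ ℓᵢ(w) has minimizer w_λ with 1-Lipschitz convex differentiable losses ℓᵢ, and g(·, x, y) is L-Lipschitz in w for all (x,y), the validation score f_V(w) = -(1/m)Σⱼ g(w, x̄ⱼ, ȳⱼ) satisfies |f_V(w_λ) - f_V(w_{λ'})| ≤ L(λ' - λ)/(λλ') for 0 < λ < λ'. -/
/-- Quadratic growth at a minimizer of a strongly convex function. -/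
lemma validation_aux_growth {E : Type*} [NormedAddCommGroup E] [InnerProductSpace ℝ E]
    {f : E → ℝ} {m : ℝ} (hm : 0 ≤ m) (hf : StrongConvexOn Set.univ m f)
    {w : E} (hw : IsMinOn f Set.univ w) (v : E) :
    f w + m / 2 * ‖v - w‖ ^ 2 ≤ f v := by
  have key : ∀ t : ℝ, 0 < t → t ≤ 1 →
      m / 2 * ‖v - w‖ ^ 2 * (1 - t) ≤ f v - f w := by
    intro t ht ht1
    have h2 := hf.2 (Set.mem_univ v) (Set.mem_univ w) ht.le
      (by linarith : (0:ℝ) ≤ 1 - t) (by ring)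
    have h3 : f w ≤ f (t • v + (1 - t) • w) := hw (Set.mem_univ _)
    simp only [smul_eq_mul] at h2
    have h4 : t * ((f w - f v) + m / 2 * ‖v - w‖ ^ 2 * (1 - t)) ≤ t * 0 := by nlinarith
    have h5 := le_of_mul_le_mul_left h4 ht
    linarith
  rcases eq_or_lt_of_le (show (0:ℝ) ≤ m / 2 * ‖v - w‖ ^ 2 by positivity) with hC | hC
  · linarith [key 1 one_pos le_rfl]
  · refine le_of_forall_pos_le_add fun ε hε => ?_
    set C := m / 2 * ‖v - w‖ ^ 2 with hCdef
    set t := min 1 (ε / C) with htdef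
    have ht0 : 0 < t := lt_min one_pos (div_pos hε hC)
    have hk := key t ht0 (min_le_left _ _)
    have h6 : t * C ≤ ε := by
      calc t * C ≤ (ε / C) * C := by
            apply mul_le_mul_of_nonneg_right (min_le_right _ _) hC.le
        _ = ε := div_mul_cancel₀ _ hC.ne'
    nlinarith [hk, h6]

set_option synthInstance.maxHeartbeats 1000000 in
/-- The regularized ERM minimizer has norm at most `1/λ`. -/
lemma validation_aux_norm_bound {d n : ℕ} (ℓ : Fin n → EuclideanSpace ℝ (Fin d) → ℝ)
    (hdiff : ∀ i, Differentiable ℝ (ℓ i)) (hlip : ∀ i, LipschitzWith 1 (ℓ i))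
    {lam : ℝ} (hlam : 0 < lam) {w : EuclideanSpace ℝ (Fin d)}
    (hw : IsMinOn (fun v => lam / 2 * ‖v‖ ^ 2 + (1 / (n : ℝ)) * ∑ i, ℓ i v) Set.univ w) :
    lam * ‖w‖ ≤ 1 := by
  set D : EuclideanSpace ℝ (Fin d) →L[ℝ] ℝ :=
    (1 / (n : ℝ)) • ∑ i, fderiv ℝ (ℓ i) w with hDdef
  have hsum : HasFDerivAt (fun v => ∑ i, ℓ i v) (∑ i, fderiv ℝ (ℓ i) w) w :=
    HasFDerivAt.fun_sum fun i _ => (hdiff i w).hasFDerivAt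
  have hF : HasFDerivAt (fun v => (1 / (n : ℝ)) * ∑ i, ℓ i v) D w := hsum.const_mul _
  have hN : HasFDerivAt (fun v : EuclideanSpace ℝ (Fin d) => lam / 2 * ‖v‖ ^ 2)
      (lam • innerSL ℝ w) w := by
    have h := (hasStrictFDerivAt_norm_sq w).hasFDerivAt.const_mul (lam / 2)
    refine h.congr_fderiv ?_
    ext v
    simp [two_smul]
    ring
  have hO : HasFDerivAt (fun v => lam / 2 * ‖v‖ ^ 2 + (1 / (n : ℝ)) * ∑ i, ℓ i v)
      (lam • innerSL ℝ w + D) w := hN.add hF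
  have hloc : IsLocalMin (fun v => lam / 2 * ‖v‖ ^ 2 + (1 / (n : ℝ)) * ∑ i, ℓ i v) w :=
    hw.isLocalMin Filter.univ_mem
  have h0 : lam • innerSL ℝ w + D = 0 := by
    rw [← hO.fderiv]; exact hloc.fderiv_eq_zero
  have h1 : lam * ‖w‖ = ‖D‖ := by
    have hneg : lam • innerSL ℝ w = -D := eq_neg_of_add_eq_zero_left h0
    calc lam * ‖w‖ = ‖lam • innerSL ℝ w‖ := by
          rw [norm_smul lam (innerSL ℝ w), innerSL_apply_norm, Real.norm_eq_abs,
            abs_of_pos hlam]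
      _ = ‖D‖ := by rw [hneg, norm_neg]
  rw [h1, hDdef]
  rcases Nat.eq_zero_or_pos n with hn0 | hn
  · subst hn0; simp
  calc ‖(1 / (n : ℝ)) • ∑ i, fderiv ℝ (ℓ i) w‖
      = (1 / (n : ℝ)) * ‖∑ i, fderiv ℝ (ℓ i) w‖ := by
        rw [norm_smul, Real.norm_eq_abs, abs_of_nonneg (by positivity)]
    _ ≤ (1 / (n : ℝ)) * ∑ i, ‖fderiv ℝ (ℓ i) w‖ := by
        gcongr
        exact norm_sum_le _ _
    _ ≤ (1 / (n : ℝ)) * ∑ _i : Fin n, (1 : ℝ) := by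
        gcongr with i
        simpa using norm_fderiv_le_of_lipschitz ℝ (hlip i)
    _ = 1 := by
        simp [Finset.sum_const]
        field_simp

/-- Stability of the validation score under changing the regularization parameter: with
`w_λ, w_{λ'}` the regularized-ERM minimizers (convex, differentiable, `1`-Lipschitz
training losses), and the validation loss `g` being `L`-Lipschitz in `w`, the validation
score `f_V(w) = -(1/m) Σⱼ g(w, x̄ⱼ, ȳⱼ)` satisfies
`|f_V(w_λ) - f_V(w_{λ'})| ≤ L (λ' - λ)/(λ λ')`. -/
theorem validation_score_stability {d n m : ℕ} {X : Type*} (hn : 0 < n) (hm : 0 < m)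
    (ℓ : Fin n → EuclideanSpace ℝ (Fin d) → ℝ)
    (hconv : ∀ i, ConvexOn ℝ Set.univ (ℓ i))
    (hdiff : ∀ i, Differentiable ℝ (ℓ i))
    (hlip : ∀ i, LipschitzWith 1 (ℓ i))
    (lam lam' : ℝ) (hlam : 0 < lam) (hlt : lam < lam')
    (w w' : EuclideanSpace ℝ (Fin d))
    (hw : IsMinOn (fun v => lam / 2 * ‖v‖ ^ 2 + (1 / (n : ℝ)) * ∑ i, ℓ i v) Set.univ w)
    (hw' : IsMinOn (fun v => lam' / 2 * ‖v‖ ^ 2 + (1 / (n : ℝ)) * ∑ i, ℓ i v) Set.univ w')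
    (g : EuclideanSpace ℝ (Fin d) → X → ℝ) (L : NNReal)
    (hg : ∀ x : X, LipschitzWith L (fun v => g v x))
    (val : Fin m → X) :
    |(-(1 / (m : ℝ)) * ∑ j, g w (val j)) - (-(1 / (m : ℝ)) * ∑ j, g w' (val j))|
      ≤ L * (lam' - lam) / (lam * lam') := by
  have hlam' : 0 < lam' := hlam.trans hlt
  -- convexity of the averaged training loss
  have hFconv : ConvexOn ℝ Set.univ
      (fun v : EuclideanSpace ℝ (Fin d) => (1 / (n : ℝ)) * ∑ i, ℓ i v) := by
    refine ⟨convex_univ, fun x _ y _ a b ha hb hab => ?_⟩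
    simp only [smul_eq_mul]
    calc (1 / (n : ℝ)) * ∑ i, ℓ i (a • x + b • y)
        ≤ (1 / (n : ℝ)) * ∑ i, (a * ℓ i x + b * ℓ i y) := by
          gcongr (1 / (n : ℝ)) * ?_
          refine Finset.sum_le_sum fun i _ => ?_
          simpa using (hconv i).2 (Set.mem_univ x) (Set.mem_univ y) ha hb hab
      _ = a * ((1 / (n : ℝ)) * ∑ i, ℓ i x) + b * ((1 / (n : ℝ)) * ∑ i, ℓ i y) := by
          rw [Finset.sum_add_distrib, ← Finset.mul_sum, ← Finset.mul_sum]
          ring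
  -- strong convexity of both objectives
  have hSO : StrongConvexOn Set.univ lam
      (fun v : EuclideanSpace ℝ (Fin d) =>
        lam / 2 * ‖v‖ ^ 2 + (1 / (n : ℝ)) * ∑ i, ℓ i v) := by
    rw [strongConvexOn_iff_convex]
    convert hFconv using 2 with v
    exacts [rfl, by ring]
  have hSO' : StrongConvexOn Set.univ lam'
      (fun v : EuclideanSpace ℝ (Fin d) =>
        lam' / 2 * ‖v‖ ^ 2 + (1 / (n : ℝ)) * ∑ i, ℓ i v) := by
    rw [strongConvexOn_iff_convex]
    convert hFconv using 2 with v
    exacts [rfl, by ring]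
  have g1 := validation_aux_growth hlam.le hSO hw w'
  have g2 := validation_aux_growth hlam'.le hSO' hw' w
  rw [show ‖w' - w‖ = ‖w - w'‖ from norm_sub_rev _ _] at g1
  have hnw : lam * ‖w‖ ≤ 1 := validation_aux_norm_bound ℓ hdiff hlip hlam hw
  have hnw' : lam' * ‖w'‖ ≤ 1 := validation_aux_norm_bound ℓ hdiff hlip hlam' hw'
  -- the key stability bound on the minimizers
  have hkey : ‖w - w'‖ ≤ (lam' - lam) / (lam * lam') := by
    rcases eq_or_lt_of_le (norm_nonneg (w - w')) with h0 | h0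
    · rw [← h0]
      exact div_nonneg (by linarith) (by positivity)
    · set s := ‖w - w'‖ with hs
      have hsub : ‖w‖ - ‖w'‖ ≤ s := norm_sub_norm_le _ _
      have step1 : (lam + lam') * s ^ 2 ≤ (lam' - lam) * (‖w‖ ^ 2 - ‖w'‖ ^ 2) := by
        nlinarith [g1, g2]
      have c1 : (lam + lam') * s ^ 2 ≤ (lam' - lam) * ((‖w‖ + ‖w'‖) * s) := by
        have hx : (‖w‖ + ‖w'‖) * (‖w‖ - ‖w'‖) ≤ (‖w‖ + ‖w'‖) * s :=
          mul_le_mul_of_nonneg_left hsub (by positivity)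
        nlinarith [mul_le_mul_of_nonneg_left hx (by linarith : (0:ℝ) ≤ lam' - lam), step1]
      have c3 : (lam + lam') * s ≤ (lam' - lam) * (‖w‖ + ‖w'‖) := by
        have := (mul_le_mul_iff_of_pos_right h0).mp
          (by nlinarith [c1] : ((lam + lam') * s) * s ≤ ((lam' - lam) * (‖w‖ + ‖w'‖)) * s)
        exact this
      have c2 : lam * lam' * (‖w‖ + ‖w'‖) ≤ lam + lam' := by
        nlinarith [mul_le_mul_of_nonneg_left hnw hlam'.le,
          mul_le_mul_of_nonneg_left hnw' hlam.le]
      have c4 : (lam * lam' * s) * (lam + lam') ≤ (lam' - lam) * (lam + lam') := by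
        nlinarith [mul_le_mul_of_nonneg_left c3 (mul_pos hlam hlam').le,
          mul_le_mul_of_nonneg_left c2 (by linarith : (0:ℝ) ≤ lam' - lam)]
      have c5 := (mul_le_mul_iff_of_pos_right (by linarith : (0:ℝ) < lam + lam')).mp c4
      rw [le_div_iff₀ (mul_pos hlam hlam')]
      linarith
  -- transfer through the Lipschitz validation loss
  have habs : |(-(1 / (m : ℝ)) * ∑ j, g w (val j)) - (-(1 / (m : ℝ)) * ∑ j, g w' (val j))|
      ≤ (L : ℝ) * ‖w - w'‖ := by
    have hrw : (-(1 / (m : ℝ)) * ∑ j, g w (val j)) - (-(1 / (m : ℝ)) * ∑ j, g w' (val j))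
        = (1 / (m : ℝ)) * ∑ j, (g w' (val j) - g w (val j)) := by
      rw [Finset.sum_sub_distrib]
      ring
    rw [hrw, abs_mul, abs_of_nonneg (by positivity : (0:ℝ) ≤ 1 / (m : ℝ))]
    calc (1 / (m : ℝ)) * |∑ j, (g w' (val j) - g w (val j))|
        ≤ (1 / (m : ℝ)) * ∑ j, |g w' (val j) - g w (val j)| := by
          gcongr
          exact Finset.abs_sum_le_sum_abs _ _
      _ ≤ (1 / (m : ℝ)) * ∑ _j : Fin m, (L : ℝ) * ‖w - w'‖ := by
          gcongr (1 / (m : ℝ)) * ?_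
          refine Finset.sum_le_sum fun j _ => ?_
          have hd := (hg (val j)).dist_le_mul w' w
          rw [Real.dist_eq, dist_eq_norm, show ‖w' - w‖ = ‖w - w'‖ from norm_sub_rev _ _]
            at hd
          exact hd
      _ = (L : ℝ) * ‖w - w'‖ := by
          rw [Finset.sum_const, Finset.card_univ, Fintype.card_fin, nsmul_eq_mul]
          field_simp
  calc |(-(1 / (m : ℝ)) * ∑ j, g w (val j)) - (-(1 / (m : ℝ)) * ∑ j, g w' (val j))|
      ≤ (L : ℝ) * ‖w - w'‖ := habs
    _ ≤ (L : ℝ) * ((lam' - lam) / (lam * lam')) :=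
        mul_le_mul_of_nonneg_left hkey L.coe_nonneg
    _ = L * (lam' - lam) / (lam * lam') := by ring
end
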